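/- The map f(λ) = λ + 1/\bar{λ} is a bijection from the set {λ ∈ ℂ : |λ| > 1} onto the set {ξ ∈ ℂ : |ξ| > 2}. -/

import Mathlib

open Complex

lemma key (z : ℂ) (hz : z ≠ 0) :
    z + 1 / (starRingEnd ℂ z) = z * (((1 + ((‖z‖)^2)⁻¹ : ℝ)) : ℂ) := by
  have hc : (starRingEnd ℂ z) ≠ 0 := by simpa using hz
  have habs : ((‖z‖ : ℝ) : ℂ) ^ 2 = z * (starRingEnd ℂ z) := by
    rw [Complex.mul_conj]
    norm_cast
    exact (Complex.normSq_eq_norm_sq z).symm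
  have habsne : ((‖z‖ : ℝ) : ℂ) ≠ 0 := by
    simpa using norm_ne_zero_iff.mpr hz
  push_cast
  field_simp
  rw [habs]
  ring

lemma keyabs (z : ℂ) (hz : z ≠ 0) :
    ‖z + 1 / (starRingEnd ℂ z)‖ = ‖z‖ + (‖z‖)⁻¹ := by
  rw [key z hz, norm_mul, Complex.norm_real, Real.norm_eq_abs]
  have h0 : (0:ℝ) < ‖z‖ := norm_pos_iff.mpr hz
  rw [abs_of_pos (by positivity)]
  field_simp

theorem stmt1 :
    Set.BijOn (fun z : ℂ => z + 1 / (starRingEnd ℂ z))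
      {z : ℂ | 1 < ‖z‖} {ξ : ℂ | 2 < ‖ξ‖} := by
  refine ⟨?_, ?_, ?_⟩
  · intro z hz
    simp only [Set.mem_setOf_eq] at hz ⊢
    have hz0 : z ≠ 0 := by
      intro h; simp [h] at hz; linarith
    have h0 : (0:ℝ) < ‖z‖ := norm_pos_iff.mpr hz0
    rw [keyabs z hz0]
    nlinarith [pow_pos (sub_pos.mpr hz) 2, mul_inv_cancel₀ h0.ne', inv_pos.mpr h0]
  · intro z hz w hw h
    simp only [Set.mem_setOf_eq] at hz hw
    have hz0 : z ≠ 0 := by intro h; simp [h] at hz; linarith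
    have hw0 : w ≠ 0 := by intro h; simp [h] at hw; linarith
    set a := ‖z‖ with ha
    set b := ‖w‖ with hb
    have h1 : (0:ℝ) < a := by linarith
    have h2 : (0:ℝ) < b := by linarith
    have habs : a + a⁻¹ = b + b⁻¹ := by
      rw [ha, hb, ← keyabs z hz0, ← keyabs w hw0]
      simp only at h
      rw [h]
    have e : a^2*b + b = a*b^2 + a := by
      have e0 : (a + a⁻¹) * (a*b) = (b + b⁻¹) * (a*b) := by rw [habs]
      field_simp at e0
      have e1 : (a*b) * (a^2*b + b) = (a*b) * (a*b^2 + a) := by linear_combination (a*b) * e0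
      exact mul_left_cancel₀ (mul_pos h1 h2).ne' e1
    have heq : a = b := by
      have hab : 1 < a * b := by nlinarith
      rcases lt_trichotomy a b with hlt|heq|hgt
      · nlinarith [mul_pos (sub_pos.2 hlt) (sub_pos.2 hab)]
      · exact heq
      · nlinarith [mul_pos (sub_pos.2 hgt) (sub_pos.2 hab)]
    simp only at h
    rw [key z hz0, key w hw0, ← ha, ← hb, heq] at h
    have hcne : (((1 + (b^2)⁻¹ : ℝ)) : ℂ) ≠ 0 := by
      have hpos : (0:ℝ) < 1 + (b^2)⁻¹ := by positivity
      exact_mod_cast ne_of_gt hpos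
    exact mul_right_cancel₀ hcne h
  · intro ξ hξ
    simp only [Set.mem_setOf_eq] at hξ
    set s := ‖ξ‖ with hs
    obtain ⟨r, hrdef⟩ : ∃ r : ℝ, r = (s + Real.sqrt (s^2 - 4)) / 2 := ⟨_, rfl⟩
    have hs2 : (0:ℝ) ≤ s^2 - 4 := by nlinarith
    have hsq : Real.sqrt (s^2-4) ^ 2 = s^2 - 4 := Real.sq_sqrt hs2
    have hsqnn : 0 ≤ Real.sqrt (s^2-4) := Real.sqrt_nonneg _
    have hr1 : 1 < r := by rw [hrdef]; nlinarith
    have hr0 : (0:ℝ) < r := by linarith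
    have hquad : r^2 - s*r + 1 = 0 := by rw [hrdef]; nlinarith
    have hs0 : (0:ℝ) < s := by linarith
    have hξ0 : ξ ≠ 0 := by
      intro h; rw [h] at hs; simp [hs] at hξ; linarith
    have habsz : ‖((r/s : ℝ) : ℂ) * ξ‖ = r := by
      simp only [norm_mul, Complex.norm_real, Real.norm_eq_abs]
      rw [abs_of_pos (by positivity), ← hs]
      field_simp
    refine ⟨((r/s : ℝ) : ℂ) * ξ, ?_, ?_⟩
    · simp only [Set.mem_setOf_eq, habsz]; exact hr1
    · have hz0 : ((r/s : ℝ) : ℂ) * ξ ≠ 0 := by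
        have hrs0 : ((r/s : ℝ) : ℂ) ≠ 0 := by
          exact_mod_cast ne_of_gt (show (0:ℝ) < r/s by positivity)
        exact mul_ne_zero hrs0 hξ0
      simp only
      rw [key _ hz0, habsz]
      have hcast : ((1 + (r^2)⁻¹ : ℝ) : ℂ) = (((r^2+1)/r^2 : ℝ) : ℂ) := by
        norm_cast
        field_simp
      rw [hcast]
      have hfac : (r/s) * ((r^2+1)/r^2) = 1 := by
        field_simp
        nlinarith
      have hc2 : ((r/s : ℝ) : ℂ) * ξ * (((r^2+1)/r^2 : ℝ) : ℂ)
          = (((r/s) * ((r^2+1)/r^2) : ℝ) : ℂ) * ξ := by push_cast; ring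
      rw [hc2, hfac]
      simp
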